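/- Let b, c ∈ (0, π), α ∈ (0, π), and α₁ ∈ (0, α/2]. Set λ₁ = sin(α − α₁)/(sin(α − α₁) + sin(α₁)) and λ₂ = sin(α₁)/(sin(α − α₁) + sin(α₁)). Then (sin(α − α₁)·cot(b) + sin(α₁)·cot(c)) / (sin(α − α₁) + sin(α₁)) ≤ cot( b·c·(sin(α − α₁) + sin(α₁)) / (b·sin(α₁) + c·sin(α − α₁)) ), with equality if and only if b = c. -/

import Mathlib

open Real Set

lemma aux_mul_cos_lt_sin {u : ℝ} (h1 : 0 < u) (h2 : u < π) :
    u * Real.cos u < Real.sin u := by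
  rcases lt_trichotomy u (π / 2) with h | h | h
  · have ht := Real.lt_tan h1 h
    have hcos : 0 < Real.cos u := Real.cos_pos_of_mem_Ioo ⟨by linarith, h⟩
    rw [Real.tan_eq_sin_div_cos, lt_div_iff₀ hcos] at ht
    linarith
  · rw [h]; simp
  · have hcos : Real.cos u < 0 := Real.cos_neg_of_pi_div_two_lt_of_lt h (by linarith)
    have hsin : 0 < Real.sin u := Real.sin_pos_of_pos_of_lt_pi h1 h2
    nlinarith

lemma myHasDerivAt_cot {x : ℝ} (hx : Real.sin x ≠ 0) :
    HasDerivAt Real.cot (-(1 / Real.sin x ^ 2)) x := by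
  have h := (Real.hasDerivAt_cos x).div (Real.hasDerivAt_sin x) hx
  have heq : Real.cot = fun y => Real.cos y / Real.sin y :=
    funext fun y => Real.cot_eq_cos_div_sin y
  rw [heq]
  refine h.congr_deriv ?_
  have hpy := Real.sin_sq_add_cos_sq x
  field_simp
  nlinarith [hpy]

lemma mem_facts {t : ℝ} (ht : π⁻¹ < t) :
    0 < t ∧ 0 < t⁻¹ ∧ t⁻¹ < π ∧ 0 < Real.sin t⁻¹ := by
  have hπ := Real.pi_pos
  have ht0 : 0 < t := lt_trans (by positivity) ht
  have hu0 : 0 < t⁻¹ := by positivity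
  have huπ : t⁻¹ < π := by
    rw [inv_lt_comm₀ ht0 hπ] at *
    exact ht
  exact ⟨ht0, hu0, huπ, Real.sin_pos_of_pos_of_lt_pi hu0 huπ⟩

lemma hasDerivAt_f {t : ℝ} (ht : π⁻¹ < t) :
    HasDerivAt (fun t : ℝ => Real.cot t⁻¹) (1 / (t ^ 2 * Real.sin t⁻¹ ^ 2)) t := by
  obtain ⟨ht0, hu0, huπ, hs⟩ := mem_facts ht
  have h := (myHasDerivAt_cot hs.ne').comp t (hasDerivAt_inv ht0.ne')
  refine h.congr_deriv ?_
  field_simp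

lemma hasDerivAt_f' {t : ℝ} (ht : π⁻¹ < t) :
    HasDerivAt (fun t : ℝ => 1 / (t ^ 2 * Real.sin t⁻¹ ^ 2))
      (-(2 * Real.sin t⁻¹ * (t * Real.sin t⁻¹ - Real.cos t⁻¹)) /
        (t ^ 2 * Real.sin t⁻¹ ^ 2) ^ 2) t := by
  obtain ⟨ht0, hu0, huπ, hs⟩ := mem_facts ht
  have hinv : HasDerivAt (fun t : ℝ => t⁻¹) (-(t ^ 2)⁻¹) t := hasDerivAt_inv ht0.ne'
  have hsin : HasDerivAt (fun t : ℝ => Real.sin t⁻¹) (Real.cos t⁻¹ * -(t ^ 2)⁻¹) t :=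
    (Real.hasDerivAt_sin t⁻¹).comp t hinv
  have hψ : HasDerivAt (fun t : ℝ => t ^ 2 * Real.sin t⁻¹ ^ 2)
      (2 * t ^ 1 * Real.sin t⁻¹ ^ 2 + t ^ 2 * (2 * Real.sin t⁻¹ ^ 1 * (Real.cos t⁻¹ * -(t ^ 2)⁻¹))) t :=
    (hasDerivAt_pow 2 t).mul (hsin.pow 2)
  have hψ0 : t ^ 2 * Real.sin t⁻¹ ^ 2 ≠ 0 := by positivity
  have h := (hasDerivAt_const t (1:ℝ)).div hψ hψ0
  refine h.congr_deriv ?_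
  congr 1
  field_simp
  ring

lemma strictConcave_f : StrictConcaveOn ℝ (Set.Ioi π⁻¹) (fun t : ℝ => Real.cot t⁻¹) := by
  apply strictConcaveOn_of_deriv2_neg (convex_Ioi _)
  · intro t ht
    exact (hasDerivAt_f ht).continuousAt.continuousWithinAt
  · intro t ht
    rw [interior_Ioi] at ht
    obtain ⟨ht0, hu0, huπ, hs⟩ := mem_facts ht
    have hderiv : deriv (fun t : ℝ => Real.cot t⁻¹) =ᶠ[nhds t]
        (fun t : ℝ => 1 / (t ^ 2 * Real.sin t⁻¹ ^ 2)) := by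
      filter_upwards [isOpen_Ioi.mem_nhds ht] with x hx
      exact (hasDerivAt_f hx).deriv
    have : deriv^[2] (fun t : ℝ => Real.cot t⁻¹) t = deriv (fun t : ℝ => 1 / (t ^ 2 * Real.sin t⁻¹ ^ 2)) t := by
      simp only [Function.iterate_succ, Function.iterate_zero, Function.comp_apply, id]
      exact hderiv.deriv_eq
    rw [this, (hasDerivAt_f' ht).deriv]
    apply div_neg_of_neg_of_pos
    · have key : t⁻¹ * Real.cos t⁻¹ < Real.sin t⁻¹ := aux_mul_cos_lt_sin hu0 huπ
      have : Real.cos t⁻¹ < t * Real.sin t⁻¹ := by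
        have h1 := mul_lt_mul_of_pos_left key ht0
        have h2 : t * (t⁻¹ * Real.cos t⁻¹) = Real.cos t⁻¹ := by
          field_simp
        linarith
      nlinarith
    · positivity

/-- For `b, c ∈ (0, π)`, `α ∈ (0, π)` and `α₁ ∈ (0, α/2]`, the weighted average of
cotangents is bounded by the cotangent of the weighted harmonic-type mean:
`(sin(α−α₁)·cot b + sin α₁·cot c)/(sin(α−α₁)+sin α₁)
  ≤ cot( b·c·(sin(α−α₁)+sin α₁)/(b·sin α₁ + c·sin(α−α₁)) )`,
with equality if and only if `b = c`. -/
theorem cot_avg_le_cot_mean (b c α α₁ : ℝ)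
    (hb : b ∈ Set.Ioo 0 π) (hc : c ∈ Set.Ioo 0 π)
    (hα : α ∈ Set.Ioo 0 π) (hα₁ : α₁ ∈ Set.Ioc 0 (α / 2)) :
    (Real.sin (α - α₁) * Real.cot b + Real.sin α₁ * Real.cot c)
        / (Real.sin (α - α₁) + Real.sin α₁)
      ≤ Real.cot (b * c * (Real.sin (α - α₁) + Real.sin α₁)
        / (b * Real.sin α₁ + c * Real.sin (α - α₁))) ∧
    ((Real.sin (α - α₁) * Real.cot b + Real.sin α₁ * Real.cot c)
        / (Real.sin (α - α₁) + Real.sin α₁)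
      = Real.cot (b * c * (Real.sin (α - α₁) + Real.sin α₁)
        / (b * Real.sin α₁ + c * Real.sin (α - α₁))) ↔ b = c) := by
  obtain ⟨hb0, hbπ⟩ := hb
  obtain ⟨hc0, hcπ⟩ := hc
  obtain ⟨hα0, hαπ⟩ := hα
  obtain ⟨hα₁0, hα₁2⟩ := hα₁
  set s₁ := Real.sin (α - α₁) with hs₁def
  set s₂ := Real.sin α₁ with hs₂def
  have hs₁ : 0 < s₁ := Real.sin_pos_of_pos_of_lt_pi (by linarith) (by linarith)
  have hs₂ : 0 < s₂ := Real.sin_pos_of_pos_of_lt_pi hα₁0 (by linarith)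
  have hS : 0 < s₁ + s₂ := by linarith
  set lam₁ := s₁ / (s₁ + s₂) with hlam₁def
  set lam₂ := s₂ / (s₁ + s₂) with hlam₂def
  have hlam₁ : 0 < lam₁ := by positivity
  have hlam₂ : 0 < lam₂ := by positivity
  have hlamsum : lam₁ + lam₂ = 1 := by
    rw [hlam₁def, hlam₂def, ← add_div, div_self hS.ne']
  have ht₁ : b⁻¹ ∈ Set.Ioi π⁻¹ := inv_strictAnti₀ hb0 hbπ
  have ht₂ : c⁻¹ ∈ Set.Ioi π⁻¹ := inv_strictAnti₀ hc0 hcπ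
  have hD : 0 < b * s₂ + c * s₁ := by positivity
  -- the LHS as a convex combination of f-values
  have hLHS : (s₁ * Real.cot b + s₂ * Real.cot c) / (s₁ + s₂)
      = lam₁ • (fun t : ℝ => Real.cot t⁻¹) b⁻¹ + lam₂ • (fun t : ℝ => Real.cot t⁻¹) c⁻¹ := by
    simp only [smul_eq_mul, inv_inv, hlam₁def, hlam₂def]
    field_simp
  -- the RHS argument as the inverse of the convex combination
  have hmix : lam₁ • b⁻¹ + lam₂ • c⁻¹ = (b * c * (s₁ + s₂) / (b * s₂ + c * s₁))⁻¹ := by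
    simp only [smul_eq_mul, hlam₁def, hlam₂def]
    rw [inv_div]
    field_simp
    ring
  have hRHS : Real.cot (b * c * (s₁ + s₂) / (b * s₂ + c * s₁))
      = (fun t : ℝ => Real.cot t⁻¹) (lam₁ • b⁻¹ + lam₂ • c⁻¹) := by
    simp only [hmix, inv_inv]
  have hconc := strictConcave_f
  constructor
  · rw [hLHS, hRHS]
    exact hconc.concaveOn.2 ht₁ ht₂ hlam₁.le hlam₂.le hlamsum
  · constructor
    · intro heq
      by_contra hne
      have hne' : b⁻¹ ≠ c⁻¹ := fun h => hne (inv_injective h)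
      have := hconc.2 ht₁ ht₂ hne' hlam₁ hlam₂ hlamsum
      rw [hLHS, hRHS] at heq
      linarith [heq ▸ this]
    · intro heq
      subst heq
      have harg : b * b * (s₁ + s₂) / (b * s₂ + b * s₁) = b := by
        rw [div_eq_iff (by positivity)]
        ring
      rw [harg, div_eq_iff hS.ne']
      ring
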